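/- Let {λ_n} (n ∈ ℕ) be a sequence of distinct real numbers and suppose {G_n} is a sequence such that for each n ∈ ℕ, G_n is a graph on the n vertices {1, …, n} and G_n is the induced subgraph of G_{n+1} on {1, …, n}. Then for any sequence of positive real numbers {ε_n} there exists a sequence of real symmetric matrices {A_n}, with A_n of size n × n, such that for every n ∈ ℕ: (i) the graph of A_n is G_n and the spectrum (set of eigenvalues) of A_n is {λ_1, …, λ_n}, and (ii) ‖(A_n ⊕ [λ_{n+1}]) − A_{n+1}‖_op < ε_n, where A_n ⊕ [λ_{n+1}] denotes the (n+1) × (n+1) block-diagonal matrix with blocks A_n and the 1×1 matrix [λ_{n+1}], and ‖·‖_op denotes the operator norm of a matrix acting on Euclidean space ℝ^{n+1} with the ℓ² norm. -/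

import Mathlib

open Matrix NormedSpace

namespace IEPGaux

noncomputable section


noncomputable section

abbrev Mn (n : ℕ) := Matrix (Fin n) (Fin n) ℝ

def skw (n : ℕ) : Submodule ℝ (Mn n) where
  carrier := {S | Sᵀ = -S}
  add_mem' := by
    intro a b ha hb
    simp only [Set.mem_setOf_eq] at *
    rw [transpose_add, ha, hb, neg_add]
  zero_mem' := by simp
  smul_mem' := by
    intro c a ha
    simp only [Set.mem_setOf_eq] at *
    rw [transpose_smul, ha, smul_neg]

def symOff (n : ℕ) : Submodule ℝ (Mn n) where
  carrier := {M | Mᵀ = M ∧ ∀ i, M i i = 0}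
  add_mem' := by
    rintro a b ⟨ha1, ha2⟩ ⟨hb1, hb2⟩
    refine ⟨by rw [transpose_add, ha1, hb1], fun i => by simp [Matrix.add_apply, ha2 i, hb2 i]⟩
  zero_mem' := by simp
  smul_mem' := by
    rintro c a ⟨ha1, ha2⟩
    refine ⟨by rw [transpose_smul, ha1], fun i => by simp [Matrix.smul_apply, ha2 i]⟩

lemma skw_diag {n : ℕ} (S : skw n) (i : Fin n) : (S : Mn n) i i = 0 := by
  have h : (S : Mn n)ᵀ i i = (-(S : Mn n)) i i := by rw [S.2]
  simp only [transpose_apply, Matrix.neg_apply] at h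
  linarith

lemma symOff_symm {n : ℕ} (M : symOff n) (i j : Fin n) : (M : Mn n) j i = (M : Mn n) i j := by
  have h : (M : Mn n)ᵀ i j = (M : Mn n) i j := by rw [M.2.1]
  simpa [transpose_apply] using h

/-- projection onto symmetric off-diagonal part -/
def offProj (n : ℕ) : Mn n →ₗ[ℝ] symOff n where
  toFun M := ⟨Matrix.of fun i j => if i = j then 0 else (M i j + M j i) / 2, by
    refine ⟨?_, fun i => by simp⟩
    ext i j
    by_cases h : i = j
    · simp [h]
    · simp only [transpose_apply, of_apply, if_neg h, if_neg (Ne.symm h)]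
      ring⟩
  map_add' a b := by
    apply Subtype.ext
    ext i j
    by_cases h : i = j <;>
      simp [Matrix.add_apply, h] <;> ring
  map_smul' c a := by
    apply Subtype.ext
    ext i j
    by_cases h : i = j <;>
      simp [Matrix.smul_apply, h, smul_eq_mul] <;> ring

variable {n : ℕ}

def Tfwd (d : Fin n → ℝ) : skw n →ₗ[ℝ] symOff n where
  toFun S := ⟨(S : Mn n) * diagonal d - diagonal d * (S : Mn n), by
    constructor
    · have hS : (S : Mn n)ᵀ = -(S : Mn n) := S.2
      rw [transpose_sub, transpose_mul, transpose_mul, diagonal_transpose, hS]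
      simp only [mul_neg, neg_mul, sub_neg_eq_add]
      abel
    · intro i
      simp [Matrix.sub_apply, mul_diagonal, diagonal_mul, mul_comm]⟩
  map_add' a b := by
    apply Subtype.ext
    simp only [Submodule.coe_add, add_mul, mul_add]
    abel
  map_smul' c a := by
    apply Subtype.ext
    simp only [Submodule.coe_smul, smul_mul_assoc, mul_smul_comm, RingHom.id_apply, smul_sub]

def Tinv (d : Fin n → ℝ) : symOff n →ₗ[ℝ] skw n where
  toFun M := ⟨Matrix.of fun i j => if i = j then 0 else (M : Mn n) i j / (d j - d i), by
    show _ = _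
    ext i j
    by_cases h : i = j
    · simp [h]
    · simp only [transpose_apply, of_apply, if_neg h, if_neg (Ne.symm h), Matrix.neg_apply,
        symOff_symm M i j]
      rw [← div_neg, neg_sub]⟩
  map_add' a b := by
    apply Subtype.ext
    ext i j
    by_cases h : i = j <;> simp [Matrix.add_apply, h] <;> ring
  map_smul' c a := by
    apply Subtype.ext
    ext i j
    by_cases h : i = j <;> simp [Matrix.smul_apply, h, smul_eq_mul] <;> ring

def Teq (d : Fin n → ℝ) (hd : Function.Injective d) : skw n ≃ₗ[ℝ] symOff n :=
  LinearEquiv.ofLinear (Tfwd d) (Tinv d)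
    (by
      apply LinearMap.ext; intro M; apply Subtype.ext; ext i j
      by_cases h : i = j
      · simp [Tfwd, Tinv, Matrix.sub_apply, mul_diagonal, diagonal_mul, h, M.2.2]
      · have hne : d j - d i ≠ 0 := sub_ne_zero.mpr fun hh => h (hd hh).symm
        simp only [Tfwd, Tinv, LinearMap.coe_comp, LinearMap.coe_mk, AddHom.coe_mk,
          Function.comp_apply, LinearMap.id_apply, Matrix.sub_apply, mul_diagonal, diagonal_mul,
          of_apply, if_neg h]
        field_simp)
    (by
      apply LinearMap.ext; intro S; apply Subtype.ext; ext i j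
      by_cases h : i = j
      · subst h; simp [Tfwd, Tinv, skw_diag S i]
      · have hne : d j - d i ≠ 0 := sub_ne_zero.mpr fun hh => h (hd hh).symm
        simp only [Tfwd, Tinv, LinearMap.coe_comp, LinearMap.coe_mk, AddHom.coe_mk,
          Function.comp_apply, LinearMap.id_apply, Matrix.sub_apply, mul_diagonal, diagonal_mul,
          of_apply, if_neg h]
        field_simp)


lemma skw_apply {n : ℕ} (S : skw n) (i j : Fin n) : (S : Mn n) j i = -(S : Mn n) i j := by
  have h : (S : Mn n)ᵀ i j = (-(S : Mn n)) i j := by rw [S.2]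
  simpa [transpose_apply] using h

set_option synthInstance.maxHeartbeats 1000000 in
set_option maxHeartbeats 4000000 in
theorem key {n : ℕ} (d : Fin n → ℝ) (hd : Function.Injective d)
    (G : SimpleGraph (Fin n)) (δ : ℝ) (hδ : 0 < δ) :
    ∃ A : Mn n, A.IsSymm ∧
      (∀ i j, i ≠ j → (A i j ≠ 0 ↔ G.Adj i j)) ∧
      spectrum ℝ A = Set.range d ∧
      ∀ i j, |A i j - diagonal d i j| < δ := by
  classical
  letI : NormedRing (Mn n) := Matrix.linftyOpNormedRing
  letI : NormedAlgebra ℝ (Mn n) := Matrix.linftyOpNormedAlgebra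
  haveI : CompleteSpace (Mn n) := FiniteDimensional.complete ℝ _
  set D : Mn n := diagonal d with hD
  set ι : skw n →L[ℝ] Mn n := (skw n).subtypeL with hι
  have hexp : HasStrictFDerivAt (exp : Mn n → Mn n) (1 : Mn n →L[ℝ] Mn n) 0 :=
    hasStrictFDerivAt_exp_zero
  have hcoe : HasStrictFDerivAt (fun S : skw n => (S : Mn n)) ι 0 := ι.hasStrictFDerivAt
  have hu : HasStrictFDerivAt (fun S : skw n => exp (S : Mn n))
      ((1 : Mn n →L[ℝ] Mn n).comp ι) 0 := hexp.comp 0 hcoe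
  have hv := hu.mul' (hasStrictFDerivAt_const D (0 : skw n))
  let τℓ : Mn n →ₗ[ℝ] Mn n :=
    { toFun := fun M => Mᵀ, map_add' := fun a b => transpose_add a b,
      map_smul' := fun c a => transpose_smul c a }
  let τ : Mn n →L[ℝ] Mn n := τℓ.toContinuousLinearMap
  have hτ : HasStrictFDerivAt (fun M : Mn n => Mᵀ) τ ((fun S : skw n => exp (S : Mn n)) 0) :=
    τ.hasStrictFDerivAt
  have hw := HasStrictFDerivAt.comp (g := fun M : Mn n => Mᵀ)
    (f := fun S : skw n => exp (S : Mn n)) (0 : skw n) hτ hu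
  have hp := hv.mul' hw
  let πL : Mn n →L[ℝ] symOff n := (offProj n).toContinuousLinearMap
  have hπ : HasStrictFDerivAt (⇑πL) πL
      ((fun y : skw n => (exp (y : Mn n) * D) *
        ((fun M : Mn n => Mᵀ) ∘ (fun S : skw n => exp (S : Mn n))) y) 0) :=
    πL.hasStrictFDerivAt
  have hf := HasStrictFDerivAt.comp (g := ⇑πL) (0 : skw n) hπ hp
  let T' : skw n ≃L[ℝ] symOff n := (Teq d hd).toContinuousLinearEquiv
  have hf' : HasStrictFDerivAt
      (fun S : skw n => πL (exp (S : Mn n) * D * (exp (S : Mn n))ᵀ))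
      (T' : skw n →L[ℝ] symOff n) 0 := by
    refine hf.congr_fderiv ?_
    symm
    refine ContinuousLinearMap.ext fun X => ?_
    refine Subtype.ext ?_
    refine Matrix.ext fun i j => ?_
    change _ = (πL (exp ((0 : skw n) : Mn n) * D * ((X : Mn n))ᵀ +
      (exp ((0 : skw n) : Mn n) * 0 + (X : Mn n) * D) * (exp ((0 : skw n) : Mn n))ᵀ) : Mn n) i j
    simp only [ContinuousLinearMap.comp_apply, ContinuousLinearMap.add_apply,
      ContinuousLinearMap.coe_smul', Pi.smul_apply, ContinuousLinearMap.smulRight_apply,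
      ContinuousLinearMap.zero_apply, smul_zero, zero_add, ContinuousLinearMap.one_apply,
      ZeroMemClass.coe_zero, exp_zero, one_mul, mul_one, transpose_one, smul_eq_mul,
      Submodule.subtypeL_apply, LinearMap.coe_toContinuousLinearMap',
      ContinuousLinearEquiv.coe_coe, LinearMap.coe_mk, AddHom.coe_mk, T', τ, τℓ, πL, ι,
      LinearEquiv.coe_toContinuousLinearEquiv', offProj, Teq, LinearEquiv.ofLinear_apply,
      Tfwd, of_apply, Matrix.add_apply, Matrix.sub_apply, hD, mul_diagonal, diagonal_mul,
      transpose_apply]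
    by_cases h : i = j
    · subst h
      simp [skw_diag X i]
    · simp only [if_neg h]
      rw [skw_apply X i j, skw_apply X j i]
      ring
  have hf0 : πL (exp (((0 : skw n)) : Mn n) * D * (exp (((0 : skw n)) : Mn n))ᵀ) = 0 := by
    refine Subtype.ext ?_
    refine Matrix.ext fun i j => ?_
    simp only [ZeroMemClass.coe_zero, exp_zero, one_mul, transpose_one, mul_one,
      LinearMap.coe_toContinuousLinearMap', πL, offProj, LinearMap.coe_mk, AddHom.coe_mk,
      of_apply]
    by_cases h : i = j
    · simp [h]
    · simp [h, hD, diagonal_apply_ne _ h, diagonal_apply_ne _ (Ne.symm h)]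
  have hmap : Filter.map (fun S : skw n => πL (exp (S : Mn n) * D * (exp (S : Mn n))ᵀ))
      (nhds 0) = nhds 0 := by
    have h := hf'.map_nhds_eq_of_equiv
    rwa [hf0] at h
  -- the open set of good perturbations
  have hgc : Continuous (fun S : skw n => exp (S : Mn n) * D * (exp (S : Mn n))ᵀ) := by
    have h1 : Continuous (fun S : skw n => exp (S : Mn n)) :=
      (continuous_iff_continuousAt.2 fun x =>
        (exp_analytic (𝕂 := ℝ) x).continuousAt).comp continuous_subtype_val
    exact (h1.mul continuous_const).mul h1.matrix_transpose
  set V : Set (skw n) :=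
    {S : skw n | ∀ i j, |(exp (S : Mn n) * D * (exp (S : Mn n))ᵀ) i j - D i j| < δ} with hV
  have hVopen : IsOpen V := by
    rw [hV, Set.setOf_forall]
    refine isOpen_iInter_of_finite fun i => ?_
    rw [Set.setOf_forall]
    refine isOpen_iInter_of_finite fun j => ?_
    exact isOpen_lt (((hgc.matrix_elem i j).sub continuous_const).abs) continuous_const
  have hV0 : (0 : skw n) ∈ V := by
    intro i j
    simp [exp_zero, hδ]
  have himg : (fun S : skw n => πL (exp (S : Mn n) * D * (exp (S : Mn n))ᵀ)) '' V ∈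
      nhds (0 : symOff n) := by
    rw [← hmap]
    exact Filter.image_mem_map (hVopen.mem_nhds hV0)
  obtain ⟨r, hr, hball⟩ := Metric.mem_nhds_iff.mp himg
  set N : symOff n := ⟨Matrix.of fun i j => if G.Adj i j then (1 : ℝ) else 0, by
    constructor
    · refine Matrix.ext fun i j => ?_
      simp only [transpose_apply, of_apply]
      by_cases h : G.Adj i j
      · simp [h, h.symm]
      · rw [if_neg h, if_neg (show ¬G.Adj j i from fun hh => h hh.symm)]
    · intro i
      simp [SimpleGraph.irrefl]⟩ with hN
  have hsm : Filter.Tendsto (fun s : ℝ => s • N) (nhds 0) (nhds (0 : symOff n)) := by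
    have hc : Continuous fun s : ℝ => s • N := continuous_id.smul continuous_const
    have := hc.tendsto 0
    simpa using this
  have hev : ∀ᶠ s in nhds (0 : ℝ), s • N ∈ Metric.ball (0 : symOff n) r :=
    hsm.eventually (Metric.ball_mem_nhds _ hr)
  obtain ⟨ε', hε', hball'⟩ := Metric.eventually_nhds_iff.mp hev
  set t : ℝ := ε' / 2 with ht
  have htpos : 0 < t := by positivity
  have htN : t • N ∈ Metric.ball (0 : symOff n) r := by
    apply hball'
    rw [Real.dist_eq, sub_zero, abs_of_pos htpos]
    rw [ht]; linarith
  obtain ⟨S, hSV, hfS⟩ := hball htN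
  set P : Mn n := exp (S : Mn n) with hP
  refine ⟨P * D * Pᵀ, ?_, ?_, ?_, ?_⟩
  · show (P * D * Pᵀ)ᵀ = P * D * Pᵀ
    rw [transpose_mul, transpose_mul, transpose_transpose, hD, diagonal_transpose,
      Matrix.mul_assoc]
  · have hTsym : (P * D * Pᵀ)ᵀ = P * D * Pᵀ := by
      rw [transpose_mul, transpose_mul, transpose_transpose, hD, diagonal_transpose,
        Matrix.mul_assoc]
    have hsym : ∀ a b, (P * D * Pᵀ) b a = (P * D * Pᵀ) a b := by
      intro a b
      have h := congrFun (congrFun hTsym b) a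
      simpa [transpose_apply] using h.symm
    have hent : ∀ i j, i ≠ j →
        (P * D * Pᵀ) i j = t * (if G.Adj i j then (1 : ℝ) else 0) := by
      intro i j hij
      have h2 := congrArg (fun M : symOff n => (M : Mn n) i j) hfS
      simp only [πL, LinearMap.coe_toContinuousLinearMap', offProj, LinearMap.coe_mk,
        AddHom.coe_mk, of_apply, if_neg hij, SetLike.val_smul, Pi.smul_apply, smul_eq_mul,
        hN, Matrix.smul_apply] at h2
      rw [← hP] at h2
      linarith [h2, hsym i j]
    intro i j hij
    rw [hent i j hij]
    by_cases h : G.Adj i j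
    · simpa [h] using htpos.ne'
    · simp [h]
  · have hPunit : IsUnit P := Matrix.isUnit_exp _
    have hPt : Pᵀ = P⁻¹ := by
      rw [hP, ← Matrix.exp_transpose, S.2, Matrix.exp_neg]
    obtain ⟨u, hu⟩ := hPunit
    have hA2 : P * D * Pᵀ = ↑u * D * ↑u⁻¹ := by
      rw [hPt, ← hu, Matrix.coe_units_inv]
    rw [hA2, spectrum.units_conjugate, hD, spectrum_diagonal]
  · intro i j
    exact hSV i j

end
end
end IEPGaux

open Matrix in
lemma clm_bound {m : ℕ} (M : Matrix (Fin m) (Fin m) ℝ) {c : ℝ} (hc : 0 ≤ c)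
    (h : ∀ i j, |M i j| ≤ c) :
    ‖Matrix.toEuclideanCLM (𝕜 := ℝ) M‖ ≤ ((m : ℝ)^2) * c := by
  refine ContinuousLinearMap.opNorm_le_bound _ (by positivity) fun x => ?_
  set y := Matrix.toEuclideanCLM (𝕜 := ℝ) M x with hy
  have hyi : ∀ i, y i = ∑ j, M i j * x j := by
    intro i
    have h1 := congrFun (Matrix.ofLp_toEuclideanCLM (𝕜 := ℝ) M x) i
    exact h1
  have hx : ∀ j, |x j| ≤ ‖x‖ := by
    intro j
    rw [EuclideanSpace.norm_eq]
    calc |x j| = Real.sqrt (|x j|^2) := by rw [Real.sqrt_sq_eq_abs, abs_abs]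
    _ ≤ _ := by
        apply Real.sqrt_le_sqrt
        have : |x j|^2 = ‖x j‖^2 := by rw [Real.norm_eq_abs]
        rw [this]
        exact Finset.single_le_sum (f := fun k => ‖x k‖^2) (fun k _ => by positivity)
          (Finset.mem_univ j)
  have hcoord : ∀ i, ‖y i‖ ≤ (m : ℝ) * (c * ‖x‖) := by
    intro i
    rw [Real.norm_eq_abs, hyi i]
    calc |∑ j, M i j * x j| ≤ ∑ j, |M i j * x j| := Finset.abs_sum_le_sum_abs _ _
    _ ≤ ∑ _j : Fin m, c * ‖x‖ := by
        refine Finset.sum_le_sum fun j _ => ?_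
        rw [abs_mul]
        exact mul_le_mul (h i j) (hx j) (abs_nonneg _) hc
    _ = (m : ℝ) * (c * ‖x‖) := by
        rw [Finset.sum_const, Finset.card_univ, Fintype.card_fin, nsmul_eq_mul]
  have hynorm : ‖y‖ ≤ Real.sqrt ((m : ℝ) * ((m : ℝ) * (c * ‖x‖))^2) := by
    rw [EuclideanSpace.norm_eq]
    apply Real.sqrt_le_sqrt
    calc ∑ i, ‖y i‖^2 ≤ ∑ _i : Fin m, ((m : ℝ) * (c * ‖x‖))^2 :=
        Finset.sum_le_sum fun i _ => pow_le_pow_left₀ (norm_nonneg _) (hcoord i) 2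
    _ = (m : ℝ) * ((m : ℝ) * (c * ‖x‖))^2 := by
        rw [Finset.sum_const, Finset.card_univ, Fintype.card_fin, nsmul_eq_mul]
  refine hynorm.trans ?_
  have hmm : (m : ℝ) * ((m : ℝ) * (c * ‖x‖))^2 ≤ (((m : ℝ)^2) * c * ‖x‖)^2 := by
    rcases Nat.eq_zero_or_pos m with hm | hm
    · simp [hm]
    · have h1 : (1 : ℝ) ≤ (m : ℝ) := by exact_mod_cast hm
      have h2 : (0 : ℝ) ≤ c * ‖x‖ := by positivity
      nlinarith [sq_nonneg (c * ‖x‖), norm_nonneg x]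
  calc Real.sqrt ((m : ℝ) * ((m : ℝ) * (c * ‖x‖))^2) ≤
      Real.sqrt ((((m : ℝ)^2) * c * ‖x‖)^2) := Real.sqrt_le_sqrt hmm
  _ = ((m : ℝ)^2) * c * ‖x‖ := Real.sqrt_sq (by positivity)


/-- Let `(λ_n)` be a sequence of distinct real numbers and let `(G_n)` be a
sequence of graphs, where `G_n` has vertex set `Fin n` and `G_n` is the induced subgraph of
`G_{n+1}` on the first `n` vertices. Then for any sequence `(ε_n)` of positive reals there
is a sequence of real symmetric matrices `(A_n)`, with `A_n` of size `n × n`, such that for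
every `n`:
(i) the graph of `A_n` is `G_n` and the spectrum of `A_n` is `{λ_0, …, λ_{n-1}}`, and
(ii) `‖(A_n ⊕ [λ_n]) - A_{n+1}‖_op < ε_n`, where `A_n ⊕ [λ_n]` is the block-diagonal
matrix with blocks `A_n` and `[λ_n]`, and the operator norm is that of the corresponding
operator on Euclidean space. -/
theorem finite_graph_inverse_spectrum_approx
    (l : ℕ → ℝ) (hl : Function.Injective l)
    (G : ∀ n : ℕ, SimpleGraph (Fin n))
    (hG : ∀ (n : ℕ) (i j : Fin n),
      (G n).Adj i j ↔ (G (n + 1)).Adj i.castSucc j.castSucc)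
    (ε : ℕ → ℝ) (hε : ∀ n, 0 < ε n) :
    ∃ A : ∀ n : ℕ, Matrix (Fin n) (Fin n) ℝ,
      ∀ n : ℕ,
        (A n).IsSymm ∧
        (∀ i j : Fin n, i ≠ j → (A n i j ≠ 0 ↔ (G n).Adj i j)) ∧
        spectrum ℝ (A n) = Set.range (fun i : Fin n => l i) ∧
        ‖Matrix.toEuclideanCLM (𝕜 := ℝ)
            ((Matrix.of fun i j : Fin (n + 1) =>
                if h : (i : ℕ) < n ∧ (j : ℕ) < n then A n ⟨i, h.1⟩ ⟨j, h.2⟩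
                else if i = j then l n else 0)
              - A (n + 1))‖ < ε n := by
  classical
  set δ : ℕ → ℝ := fun k => min (ε k) (ε (k - 1)) / (2 * ((k : ℝ) + 2)^2) with hδdef
  have hδpos : ∀ k, 0 < δ k := fun k =>
    div_pos (lt_min (hε k) (hε (k - 1))) (by positivity)
  choose A hA1 hA2 hA3 hA4 using fun k : ℕ =>
    IEPGaux.key (fun i : Fin k => l i) (hl.comp Fin.val_injective) (G k) (δ k) (hδpos k)
  refine ⟨A, fun k => ⟨hA1 k, hA2 k, hA3 k, ?_⟩⟩
  set B : Matrix (Fin (k + 1)) (Fin (k + 1)) ℝ :=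
    Matrix.of fun i j : Fin (k + 1) =>
      if h : (i : ℕ) < k ∧ (j : ℕ) < k then A k ⟨i, h.1⟩ ⟨j, h.2⟩
      else if i = j then l k else 0 with hB
  have hent : ∀ i j, |(B - A (k + 1)) i j| ≤ δ k + δ (k + 1) := by
    intro i j
    have h2 : |A (k + 1) i j - diagonal (fun i : Fin (k + 1) => l i) i j| < δ (k + 1) :=
      hA4 (k + 1) i j
    have h1 : |B i j - diagonal (fun i : Fin (k + 1) => l i) i j| ≤ δ k := by
      by_cases hij : (i : ℕ) < k ∧ (j : ℕ) < k
      · have hBij : B i j = A k ⟨i, hij.1⟩ ⟨j, hij.2⟩ := by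
          rw [hB]; simp [of_apply, dif_pos hij]
        have hdiag : diagonal (fun i : Fin (k + 1) => l i) i j =
            diagonal (fun i : Fin k => l i) ⟨i, hij.1⟩ ⟨j, hij.2⟩ := by
          by_cases h : i = j
          · subst h; simp [diagonal_apply_eq]
          · have h' : (⟨(i : ℕ), hij.1⟩ : Fin k) ≠ ⟨(j : ℕ), hij.2⟩ := by
              intro hh
              have hval := congrArg Fin.val hh
              exact h (Fin.ext hval)
            rw [diagonal_apply_ne _ h, diagonal_apply_ne _ h']
        rw [hBij, hdiag]
        exact (hA4 k ⟨i, hij.1⟩ ⟨j, hij.2⟩).le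
      · by_cases h : i = j
        · subst h
          have hik : (i : ℕ) = k := by
            have := i.isLt
            omega
          have hBii : B i i = l k := by
            rw [hB, of_apply, dif_neg hij, if_pos rfl]
          rw [hBii, diagonal_apply_eq]
          simp [hik, (hδpos k).le]
        · have hBij : B i j = 0 := by
            rw [hB]; simp [of_apply, dif_neg hij, if_neg h]
          rw [hBij, diagonal_apply_ne _ h]
          simpa using (hδpos k).le
    calc |(B - A (k + 1)) i j|
        = |(B i j - diagonal (fun i : Fin (k + 1) => l i) i j) -
            (A (k + 1) i j - diagonal (fun i : Fin (k + 1) => l i) i j)| := by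
          rw [Matrix.sub_apply]; ring_nf
    _ ≤ |B i j - diagonal (fun i : Fin (k + 1) => l i) i j| +
          |A (k + 1) i j - diagonal (fun i : Fin (k + 1) => l i) i j| := abs_sub _ _
    _ ≤ δ k + δ (k + 1) := add_le_add h1 h2.le
  have hnorm := clm_bound (B - A (k + 1)) (add_pos (hδpos k) (hδpos (k + 1))).le hent
  refine lt_of_le_of_lt hnorm ?_
  -- arithmetic
  have hK : (0 : ℝ) ≤ (k : ℝ) := Nat.cast_nonneg k
  have ha : δ k ≤ ε k / (2 * ((k : ℝ) + 2)^2) := by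
    simp only [hδdef]
    gcongr
    exact min_le_left _ _
  have hb : δ (k + 1) ≤ ε k / (2 * ((k : ℝ) + 2)^2) := by
    simp only [hδdef]
    have h1 : min (ε (k + 1)) (ε ((k + 1) - 1)) ≤ ε k := by
      simpa using min_le_right (ε (k + 1)) (ε k)
    calc min (ε (k + 1)) (ε ((k + 1) - 1)) / (2 * (((k + 1 : ℕ) : ℝ) + 2)^2)
        ≤ ε k / (2 * (((k + 1 : ℕ) : ℝ) + 2)^2) := by gcongr
    _ ≤ ε k / (2 * ((k : ℝ) + 2)^2) := by
        have hεk := (hε k).le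
        gcongr
        · push_cast
          nlinarith [Nat.cast_nonneg (α := ℝ) k]
  have hfin : (((k + 1 : ℕ) : ℝ)^2) * (δ k + δ (k + 1)) < ε k := by
    have hsum : δ k + δ (k + 1) ≤ ε k / ((k : ℝ) + 2)^2 := by
      have := add_le_add ha hb
      calc δ k + δ (k + 1) ≤ ε k / (2 * ((k : ℝ) + 2)^2) + ε k / (2 * ((k : ℝ) + 2)^2) := this
      _ = ε k / ((k : ℝ) + 2)^2 := by
          field_simp
          ring
    have hq : (0 : ℝ) < ((k : ℝ) + 2)^2 := by positivity
    calc (((k + 1 : ℕ) : ℝ)^2) * (δ k + δ (k + 1))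
        ≤ (((k + 1 : ℕ) : ℝ)^2) * (ε k / ((k : ℝ) + 2)^2) := by
          have h0 : (0 : ℝ) ≤ (((k + 1 : ℕ) : ℝ)^2) := by positivity
          exact mul_le_mul_of_nonneg_left hsum h0
    _ < ε k := by
        push_cast
        rw [mul_div_assoc', div_lt_iff₀ hq]
        nlinarith [hε k, Nat.cast_nonneg (α := ℝ) k]
  exact hfin
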